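/- For d ≥ 1 and z ∈ ℝ, let B(z) be the d×d matrix whose first row has all entries equal to z, whose subdiagonal entries (i+1, i), i = 1,…,d−1, equal 1, and whose remaining entries are 0, and let ‖A‖₁ = max_{k=1,…,d} Σ_{j=1}^d |a_{jk}| denote the maximum absolute column sum norm. Then: (a) for every Δ ≥ 0, ‖B(Δ)‖₁ ≤ Δ + 1; and (b) for every δ with 0 ≤ δ ≤ 1, ‖B(δ)^d‖₁ ≤ C_d δ, where C_d = Σ_{l=0}^{d−1} Σ_{k=0}^{l} binom(l,k). -/

import Mathlib

open Finset

/-- The `d × d` matrix `B(z)`: all entries of the first row equal `z`, the subdiagonal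
entries `(i+1, i)` equal `1`, and all remaining entries are `0`. -/
def companionMat (d : ℕ) (z : ℝ) : Matrix (Fin d) (Fin d) ℝ :=
  fun i j => if (i : ℕ) = 0 then z else if (i : ℕ) = (j : ℕ) + 1 then 1 else 0

/-- The maximum absolute column sum norm `‖A‖₁ = max_k Σ_j |a_{jk}|`. -/
noncomputable def colSumNorm {d : ℕ} (A : Matrix (Fin d) (Fin d) ℝ) : ℝ :=
  ⨆ k : Fin d, ∑ j : Fin d, |A j k|

/- auxiliary lemmas -/

lemma sum_if_coe {d : ℕ} (t : ℕ) (g : Fin d → ℝ) :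
    (∑ m : Fin d, if (m : ℕ) = t then g m else 0)
      = if h : t < d then g ⟨t, h⟩ else 0 := by
  split_ifs with h
  · rw [Finset.sum_eq_single (⟨t, h⟩ : Fin d)]
    · simp
    · intro b _ hb
      rw [if_neg]
      intro hbt
      exact hb (Fin.ext hbt)
    · simp
  · apply Finset.sum_eq_zero
    intro m _
    rw [if_neg]
    have := m.isLt
    omega

lemma colSum_le_colSumNorm {d : ℕ} (A : Matrix (Fin d) (Fin d) ℝ) (k : Fin d) :
    ∑ j : Fin d, |A j k| ≤ colSumNorm A := by
  unfold colSumNorm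
  exact le_ciSup (f := fun k : Fin d => ∑ j : Fin d, |A j k|)
    (Set.Finite.bddAbove (Set.finite_range _)) k

lemma colSumNorm_le {d : ℕ} [Nonempty (Fin d)] {A : Matrix (Fin d) (Fin d) ℝ} {c : ℝ}
    (h : ∀ k, ∑ j : Fin d, |A j k| ≤ c) : colSumNorm A ≤ c := ciSup_le h

lemma colSumNorm_nonneg {d : ℕ} [Nonempty (Fin d)] (A : Matrix (Fin d) (Fin d) ℝ) :
    0 ≤ colSumNorm A := by
  refine le_trans ?_ (colSum_le_colSumNorm A (Classical.arbitrary _))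
  exact Finset.sum_nonneg fun j _ => abs_nonneg _

lemma colSumNorm_mul_le {d : ℕ} [Nonempty (Fin d)] (A B : Matrix (Fin d) (Fin d) ℝ) :
    colSumNorm (A * B) ≤ colSumNorm A * colSumNorm B := by
  apply colSumNorm_le
  intro k
  calc ∑ j : Fin d, |(A * B) j k|
      ≤ ∑ j : Fin d, ∑ m : Fin d, |A j m| * |B m k| := by
        refine Finset.sum_le_sum fun j _ => ?_
        rw [Matrix.mul_apply]
        exact (Finset.abs_sum_le_sum_abs _ _).trans (le_of_eq (by simp [abs_mul]))
    _ = ∑ m : Fin d, (∑ j : Fin d, |A j m|) * |B m k| := by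
        rw [Finset.sum_comm]
        simp [Finset.sum_mul]
    _ ≤ ∑ m : Fin d, colSumNorm A * |B m k| :=
        Finset.sum_le_sum fun m _ =>
          mul_le_mul_of_nonneg_right (colSum_le_colSumNorm A m) (abs_nonneg _)
    _ = colSumNorm A * ∑ m : Fin d, |B m k| := by rw [Finset.mul_sum]
    _ ≤ colSumNorm A * colSumNorm B :=
        mul_le_mul_of_nonneg_left (colSum_le_colSumNorm B k) (colSumNorm_nonneg A)

lemma colSumNorm_add_le {d : ℕ} [Nonempty (Fin d)] (A B : Matrix (Fin d) (Fin d) ℝ) :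
    colSumNorm (A + B) ≤ colSumNorm A + colSumNorm B := by
  apply colSumNorm_le
  intro k
  calc ∑ j : Fin d, |(A + B) j k|
      ≤ ∑ j : Fin d, (|A j k| + |B j k|) :=
        Finset.sum_le_sum fun j _ => abs_add_le _ _
    _ = (∑ j : Fin d, |A j k|) + ∑ j : Fin d, |B j k| := Finset.sum_add_distrib
    _ ≤ colSumNorm A + colSumNorm B :=
        add_le_add (colSum_le_colSumNorm A k) (colSum_le_colSumNorm B k)

lemma colSumNorm_smul {d : ℕ} [Nonempty (Fin d)] (c : ℝ) (hc : 0 ≤ c)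
    (A : Matrix (Fin d) (Fin d) ℝ) : colSumNorm (c • A) ≤ c * colSumNorm A := by
  apply colSumNorm_le
  intro k
  have : ∑ j : Fin d, |(c • A) j k| = c * ∑ j : Fin d, |A j k| := by
    rw [Finset.mul_sum]
    refine Finset.sum_congr rfl fun j _ => ?_
    simp [abs_mul, abs_of_nonneg hc]
  rw [this]
  exact mul_le_mul_of_nonneg_left (colSum_le_colSumNorm A k) hc

lemma colSumNorm_pow_le {d : ℕ} [Nonempty (Fin d)] (A : Matrix (Fin d) (Fin d) ℝ)
    {c : ℝ} (hc : colSumNorm A ≤ c) (hc0 : 0 ≤ c) (n : ℕ) :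
    colSumNorm (A ^ n) ≤ c ^ n := by
  induction n with
  | zero =>
      simp only [pow_zero]
      apply colSumNorm_le
      intro k
      have : ∑ j : Fin d, |(1 : Matrix (Fin d) (Fin d) ℝ) j k| = 1 := by
        rw [Finset.sum_eq_single k] <;> simp +contextual [Matrix.one_apply, eq_comm]
      simp [this]
  | succ n ih =>
      rw [pow_succ, pow_succ]
      calc colSumNorm (A ^ n * A) ≤ colSumNorm (A ^ n) * colSumNorm A :=
            colSumNorm_mul_le _ _
        _ ≤ c ^ n * c := mul_le_mul ih hc (colSumNorm_nonneg _) (pow_nonneg hc0 n)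

/-- entries of powers of the nilpotent shift `N = companionMat d 0`. -/
lemma shift_pow_apply {d : ℕ} (n : ℕ) (i j : Fin d) :
    (companionMat d 0 ^ n) i j = if (i : ℕ) = (j : ℕ) + n then 1 else 0 := by
  induction n generalizing i j with
  | zero => simp [Matrix.one_apply, Fin.ext_iff]
  | succ n ih =>
      rw [pow_succ, Matrix.mul_apply]
      have hterm : ∀ m : Fin d, (companionMat d 0 ^ n) i m * companionMat d 0 m j
          = if (m : ℕ) = (j : ℕ) + 1 then (if (i : ℕ) = (m : ℕ) + n then 1 else 0) else 0 := by
        intro m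
        rw [ih]
        unfold companionMat
        by_cases hm0 : (m : ℕ) = 0
        · simp [hm0]
        · rw [if_neg hm0]
          split_ifs <;> ring
      rw [Finset.sum_congr rfl fun m _ => hterm m, sum_if_coe]
      have hi := i.isLt
      split_ifs with h h1 h2 <;> (try simp only [Fin.val_mk] at *) <;> first | rfl | omega

lemma shift_pow_d {d : ℕ} : companionMat d 0 ^ d = 0 := by
  ext i j
  rw [shift_pow_apply]
  have := i.isLt
  rw [if_neg (by omega)]
  rfl

/-- the first-row-of-ones matrix -/
def rowOnes (d : ℕ) : Matrix (Fin d) (Fin d) ℝ :=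
  fun i _ => if (i : ℕ) = 0 then 1 else 0

lemma companion_decomp {d : ℕ} (z : ℝ) :
    companionMat d z = companionMat d 0 + z • rowOnes d := by
  ext i j
  rw [Matrix.add_apply, Matrix.smul_apply]
  unfold companionMat rowOnes
  by_cases h : (i : ℕ) = 0
  · simp [h]
  · simp [h]

lemma colSumNorm_rowOnes {d : ℕ} (hd : 1 ≤ d) : colSumNorm (rowOnes d) ≤ 1 := by
  haveI : Nonempty (Fin d) := ⟨⟨0, hd⟩⟩
  apply colSumNorm_le
  intro k
  have : ∑ j : Fin d, |rowOnes d j k| = ∑ j : Fin d, if (j : ℕ) = 0 then (1 : ℝ) else 0 := by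
    refine Finset.sum_congr rfl fun j _ => ?_
    unfold rowOnes
    split_ifs <;> simp
  rw [this, sum_if_coe, dif_pos (show 0 < d by omega)]

lemma colSumNorm_companion_le {d : ℕ} (hd : 1 ≤ d) {z : ℝ} (hz : 0 ≤ z) :
    colSumNorm (companionMat d z) ≤ z + 1 := by
  haveI : Nonempty (Fin d) := ⟨⟨0, hd⟩⟩
  apply colSumNorm_le
  intro k
  have hle : ∀ j : Fin d, |companionMat d z j k|
      ≤ (if (j : ℕ) = 0 then z else 0) + (if (j : ℕ) = (k : ℕ) + 1 then 1 else 0) := by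
    intro j
    unfold companionMat
    by_cases h0 : (j : ℕ) = 0
    · rw [if_pos h0, if_pos h0, abs_of_nonneg hz, if_neg (by omega)]
      simp
    · rw [if_neg h0, if_neg h0, zero_add]
      split_ifs <;> simp
  calc ∑ j : Fin d, |companionMat d z j k|
      ≤ ∑ j : Fin d, ((if (j : ℕ) = 0 then z else 0) + (if (j : ℕ) = (k : ℕ) + 1 then 1 else 0)) :=
        Finset.sum_le_sum fun j _ => hle j
    _ = (∑ j : Fin d, if (j : ℕ) = 0 then z else 0)
        + ∑ j : Fin d, if (j : ℕ) = (k : ℕ) + 1 then (1 : ℝ) else 0 := Finset.sum_add_distrib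
    _ ≤ z + 1 := by
        rw [sum_if_coe, sum_if_coe, dif_pos (show 0 < d by omega)]
        refine add_le_add le_rfl ?_
        split_ifs <;> norm_num

/-- (a) `‖B(Δ)‖₁ ≤ Δ + 1` for `Δ ≥ 0`; (b) `‖B(δ)^d‖₁ ≤ C_d δ` for `0 ≤ δ ≤ 1`,
where `C_d = Σ_{l=0}^{d−1} Σ_{k=0}^{l} binom(l,k)`. -/
theorem companion_colSumNorm_bounds (d : ℕ) (hd : 1 ≤ d) :
    (∀ Δ : ℝ, 0 ≤ Δ → colSumNorm (companionMat d Δ) ≤ Δ + 1) ∧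
    (∀ δ : ℝ, 0 ≤ δ → δ ≤ 1 →
      colSumNorm (companionMat d δ ^ d)
        ≤ (∑ l ∈ range d, ∑ k ∈ range (l + 1), (l.choose k : ℝ)) * δ) := by
  haveI : Nonempty (Fin d) := ⟨⟨0, hd⟩⟩
  constructor
  · exact fun Δ hΔ => colSumNorm_companion_le hd hΔ
  · intro δ hδ0 hδ1
    set B := companionMat d δ with hB
    set N := companionMat d 0 with hN
    -- key induction
    have key : ∀ n : ℕ, colSumNorm (B ^ n - N ^ n) ≤ ((2 : ℝ) ^ n - 1) * δ := by
      intro n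
      induction n with
      | zero =>
          simp only [pow_zero, sub_self]
          have : colSumNorm (0 : Matrix (Fin d) (Fin d) ℝ) ≤ 0 := by
            apply colSumNorm_le; intro k; simp
          simpa using this
      | succ n ih =>
          have hdecomp : B ^ (n + 1) - N ^ (n + 1)
              = δ • (rowOnes d * B ^ n) + N * (B ^ n - N ^ n) := by
            have h1 : B = N + δ • rowOnes d := companion_decomp δ
            rw [pow_succ, pow_succ, mul_sub]
            rw [show B ^ n * B = B * B ^ n from (Commute.self_pow B n).symm.eq,
                show N ^ n * N = N * N ^ n from (Commute.self_pow N n).symm.eq]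
            rw [h1]
            noncomm_ring
          rw [hdecomp]
          have hBn : colSumNorm (B ^ n) ≤ 2 ^ n := by
            have h1 : colSumNorm B ≤ δ + 1 := colSumNorm_companion_le hd hδ0
            have h2 : colSumNorm (B ^ n) ≤ (δ + 1) ^ n :=
              colSumNorm_pow_le B h1 (by linarith) n
            refine h2.trans (pow_le_pow_left₀ (by linarith) (by linarith) n)
          have hNle : colSumNorm N ≤ 1 := by
            have := colSumNorm_companion_le hd (le_refl (0 : ℝ))
            simpa using this
          calc colSumNorm (δ • (rowOnes d * B ^ n) + N * (B ^ n - N ^ n))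
              ≤ colSumNorm (δ • (rowOnes d * B ^ n)) + colSumNorm (N * (B ^ n - N ^ n)) :=
                colSumNorm_add_le _ _
            _ ≤ δ * colSumNorm (rowOnes d * B ^ n)
                + colSumNorm N * colSumNorm (B ^ n - N ^ n) :=
                add_le_add (colSumNorm_smul δ hδ0 _) (colSumNorm_mul_le _ _)
            _ ≤ δ * (1 * 2 ^ n) + 1 * (((2 : ℝ) ^ n - 1) * δ) := by
                have h3 : colSumNorm (rowOnes d * B ^ n) ≤ 1 * 2 ^ n := by
                  refine (colSumNorm_mul_le _ _).trans ?_
                  exact mul_le_mul (colSumNorm_rowOnes hd) hBn (colSumNorm_nonneg _)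
                    zero_le_one
                refine add_le_add (mul_le_mul_of_nonneg_left h3 hδ0) ?_
                exact mul_le_mul hNle ih (colSumNorm_nonneg _) zero_le_one
            _ ≤ ((2 : ℝ) ^ (n + 1) - 1) * δ := by ring_nf; nlinarith [pow_nonneg (zero_le_two (α := ℝ)) n]
    have hconst : (∑ l ∈ range d, ∑ k ∈ range (l + 1), (l.choose k : ℝ)) = 2 ^ d - 1 := by
      have h1 : ∀ l : ℕ, (∑ k ∈ range (l + 1), (l.choose k : ℝ)) = 2 ^ l := by
        intro l
        rw [← Nat.cast_sum, Nat.sum_range_choose]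
        push_cast; ring
      rw [Finset.sum_congr rfl fun l _ => h1 l]
      have := geom_sum_eq (by norm_num : (2 : ℝ) ≠ 1) d
      rw [this]; ring
    rw [hconst]
    have := key d
    rwa [shift_pow_d, sub_zero] at this
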